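/- Let V, U be complex p×q matrices with ‖V‖ < 1 and ‖U‖ ≤ 1. Then the kernel of I_q − U*U and the kernel of I_q − 𝓕_V(U)*𝓕_V(U) have the same dimension. In particular, ‖U‖ = 1 if and only if ‖𝓕_V(U)‖ = 1 (the map 𝓕_V carries the boundary of the unit ball to the boundary), and for every k, U is isometric on a subspace of ℂ^q of dimension at least k if and only if 𝓕_V(U) is isometric on a subspace of dimension at least k. -/

import Mathlib

open scoped Matrix.Norms.L2Operator ComplexOrder
open Matrix Polynomial

section RingHelpers


section RingLemmas
variable {R : Type*} [Ring R]

lemma bracket_id (r s t w w' : R) (h1 : r * w = w - 1) (h2 : w' * s = w' - 1) :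
    1 + r * w + w' * s - w' * (t - s * r) * w = w' * (1 - t) * w := by
  have e1 : w' * (t - s * r) * w = w' * t * w - (w' * s) * (r * w) := by noncomm_ring
  rw [e1, h1, h2]; noncomm_ring

lemma main_id {p q : Type*} [Fintype p] [Fintype q] [DecidableEq p] [DecidableEq q]
    (v u : Matrix p q ℂ) (a : Matrix p p ℂ) (b w w' : Matrix q q ℂ)
    (hA : a * a = 1 - v * vᴴ) (hB : b * b = 1 - vᴴ * v)
    (hI : vᴴ * a = b * vᴴ) (hI2 : a * v = v * b)
    (h1 : (vᴴ * u) * w = w - 1) (h2 : w' * (uᴴ * v) = w' - 1) :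
    1 - (vᴴ - b * w' * uᴴ * a) * (v - a * u * w * b) =
      b * (w' * (1 - uᴴ * u) * w) * b := by
  have step1 : 1 - (vᴴ - b * w' * uᴴ * a) * (v - a * u * w * b) =
      (1 - vᴴ * v) + (vᴴ * a) * (u * w * b) + (b * w' * uᴴ) * (a * v)
        - b * w' * uᴴ * (a * a) * (u * w * b) := by
    simp only [Matrix.mul_sub, Matrix.sub_mul, Matrix.mul_add, Matrix.add_mul, Matrix.mul_one, Matrix.one_mul, Matrix.mul_smul, Matrix.smul_mul, Matrix.mul_assoc]; abel
  rw [step1, hI, hI2, hA, ← hB]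
  have step3 : b * b + b * vᴴ * (u * w * b) + b * w' * uᴴ * (v * b)
      - b * w' * uᴴ * (1 - v * vᴴ) * (u * w * b) =
      b * (1 + (vᴴ * u) * w + w' * (uᴴ * v) - w' * ((uᴴ * u) - (uᴴ * v) * (vᴴ * u)) * w) * b := by
    simp only [Matrix.mul_sub, Matrix.sub_mul, Matrix.mul_add, Matrix.add_mul, Matrix.mul_one, Matrix.one_mul, Matrix.mul_smul, Matrix.smul_mul, Matrix.mul_assoc]
  rw [step3, bracket_id _ _ _ _ _ h1 h2]
end RingLemmas

section AnalHelpers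


variable {p q : ℕ}

local notation "e" => WithLp.equiv 2 _

/-- dot product with itself is the squared Euclidean norm. -/
lemma dot_self_eq_norm_sq (v : (Fin p) → ℂ) :
    star v ⬝ᵥ v = ((‖(WithLp.equiv 2 ((Fin p) → ℂ)).symm v‖ : ℂ) ^ 2) := by
  have := EuclideanSpace.inner_eq_star_dotProduct (𝕜 := ℂ)
    ((WithLp.equiv 2 ((Fin p) → ℂ)).symm v) ((WithLp.equiv 2 ((Fin p) → ℂ)).symm v)
  rw [inner_self_eq_norm_sq_to_K] at this
  rw [dotProduct_comm]
  simpa using this.symm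

lemma quad_eq (X : Matrix (Fin p) (Fin q) ℂ) (v : (Fin q) → ℂ) :
    star v ⬝ᵥ (1 - Xᴴ * X) *ᵥ v =
      ((‖(WithLp.equiv 2 ((Fin q) → ℂ)).symm v‖ : ℂ) ^ 2)
        - ((‖(WithLp.equiv 2 ((Fin p) → ℂ)).symm (X *ᵥ v)‖ : ℂ) ^ 2) := by
  rw [Matrix.sub_mulVec, dotProduct_sub, Matrix.one_mulVec, dot_self_eq_norm_sq,
    ← Matrix.mulVec_mulVec, dotProduct_mulVec, vecMul_conjTranspose, star_star,
    dot_self_eq_norm_sq]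

lemma toEuclideanLin_eq (X : Matrix (Fin p) (Fin q) ℂ) (v : (Fin q) → ℂ) :
    Matrix.toEuclideanLin X ((WithLp.equiv 2 ((Fin q) → ℂ)).symm v) =
      (WithLp.equiv 2 ((Fin p) → ℂ)).symm (X *ᵥ v) := by
  simp [Matrix.toEuclideanLin_apply]

lemma quad_eq' (X : Matrix (Fin p) (Fin q) ℂ) (y : EuclideanSpace ℂ (Fin q)) :
    star (WithLp.equiv 2 ((Fin q) → ℂ) y) ⬝ᵥ (1 - Xᴴ * X) *ᵥ (WithLp.equiv 2 ((Fin q) → ℂ) y) =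
      (((‖y‖ : ℂ) ^ 2) - ((‖Matrix.toEuclideanLin X y‖ : ℂ) ^ 2)) := by
  rw [quad_eq, ← toEuclideanLin_eq]
  simp

lemma norm_mulVec_le (X : Matrix (Fin p) (Fin q) ℂ) (y : EuclideanSpace ℂ (Fin q)) :
    ‖Matrix.toEuclideanLin X y‖ ≤ ‖X‖ * ‖y‖ := by
  have := Matrix.l2_opNorm_mulVec X y
  have h2 : Matrix.toEuclideanLin X y
      = (EuclideanSpace.equiv (Fin p) ℂ).symm (X *ᵥ WithLp.equiv 2 ((Fin q) → ℂ) y) := by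
    rw [Matrix.toEuclideanLin_apply]; rfl
  rw [h2]
  exact this

lemma hermit (X : Matrix (Fin p) (Fin q) ℂ) : (1 - Xᴴ * X).IsHermitian :=
  Matrix.isHermitian_one.sub (Matrix.isHermitian_conjTranspose_mul_self X)

lemma psd_of_norm_le (X : Matrix (Fin p) (Fin q) ℂ) (hX : ‖X‖ ≤ 1) :
    (1 - Xᴴ * X).PosSemidef := by
  refine PosSemidef.of_dotProduct_mulVec_nonneg (hermit X) (fun v => ?_)
  set y := (WithLp.equiv 2 ((Fin q) → ℂ)).symm v with hy
  have hv : v = WithLp.equiv 2 ((Fin q) → ℂ) y := by simp [hy]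
  rw [hv, quad_eq']
  have hle : ‖Matrix.toEuclideanLin X y‖ ≤ ‖y‖ := by
    have := norm_mulVec_le X y
    nlinarith [norm_nonneg y, norm_nonneg (Matrix.toEuclideanLin X y)]
  have : ((‖y‖:ℂ)^2 - (‖Matrix.toEuclideanLin X y‖:ℂ)^2)
      = (((‖y‖^2 - ‖Matrix.toEuclideanLin X y‖^2 : ℝ)) : ℂ) := by push_cast; ring
  rw [this, Complex.zero_le_real]
  nlinarith [norm_nonneg y, norm_nonneg (Matrix.toEuclideanLin X y)]

lemma norm_le_of_psd (X : Matrix (Fin p) (Fin q) ℂ) (h : (1 - Xᴴ * X).PosSemidef) :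
    ‖X‖ ≤ 1 := by
  have key : ∀ y : EuclideanSpace ℂ (Fin q), ‖Matrix.toEuclideanLin X y‖ ≤ ‖y‖ := by
    intro y
    have h0 := h.dotProduct_mulVec_nonneg (WithLp.equiv 2 ((Fin q) → ℂ) y)
    rw [quad_eq'] at h0
    have : ((‖y‖:ℂ)^2 - (‖Matrix.toEuclideanLin X y‖:ℂ)^2)
        = (((‖y‖^2 - ‖Matrix.toEuclideanLin X y‖^2 : ℝ)) : ℂ) := by push_cast; ring
    rw [this, Complex.zero_le_real] at h0
    nlinarith [norm_nonneg y, norm_nonneg (Matrix.toEuclideanLin X y)]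
  rw [Matrix.l2_opNorm_def]
  exact ContinuousLinearMap.opNorm_le_bound _ zero_le_one (fun y => by
    simpa using key y)

lemma mem_ker_iff (X : Matrix (Fin p) (Fin q) ℂ) (h : (1 - Xᴴ * X).PosSemidef)
    (y : EuclideanSpace ℂ (Fin q)) :
    (1 - Xᴴ * X) *ᵥ (WithLp.equiv 2 ((Fin q) → ℂ) y) = 0 ↔
      ‖Matrix.toEuclideanLin X y‖ = ‖y‖ := by
  rw [← h.dotProduct_mulVec_zero_iff, quad_eq']
  constructor
  · intro h0
    have : ((‖y‖:ℂ)^2) = ((‖Matrix.toEuclideanLin X y‖:ℂ)^2) := by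
      linear_combination h0
    have h2 : (‖y‖:ℝ)^2 = ‖Matrix.toEuclideanLin X y‖^2 := by
      exact_mod_cast this
    nlinarith [norm_nonneg y, norm_nonneg (Matrix.toEuclideanLin X y)]
  · intro h0
    rw [h0, sub_self]

lemma norm_eq_one_iff (X : Matrix (Fin p) (Fin q) ℂ) (h : (1 - Xᴴ * X).PosSemidef) :
    ‖X‖ = 1 ↔ LinearMap.ker (1 - Xᴴ * X).mulVecLin ≠ ⊥ := by
  have hX : ‖X‖ ≤ 1 := norm_le_of_psd X h
  constructor
  · intro h1
    set T : EuclideanSpace ℂ (Fin q) →L[ℂ] EuclideanSpace ℂ (Fin p) :=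
      ((Matrix.toEuclideanLin (𝕜 := ℂ) (m := Fin p) (n := Fin q)).trans
        LinearMap.toContinuousLinearMap) X with hT
    have hTX : ‖X‖ = ‖T‖ := Matrix.l2_opNorm_def X
    have hTapp : ∀ y, T y = Matrix.toEuclideanLin X y := fun y => rfl
    have hT0 : T ≠ 0 := by
      intro h0
      rw [hTX, h0, norm_zero] at h1
      norm_num at h1
    obtain ⟨y, hy⟩ : ∃ y, T y ≠ 0 := by
      by_contra hc
      push_neg at hc
      exact hT0 (ContinuousLinearMap.ext fun y => by simpa using hc y)
    have hy0 : y ≠ 0 := fun h0 => hy (by simp [h0])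
    have hy1 : ‖(‖y‖⁻¹ : ℂ) • y‖ = 1 := norm_smul_inv_norm hy0
    have hK : IsCompact (Metric.sphere (0 : EuclideanSpace ℂ (Fin q)) 1) :=
      isCompact_sphere _ _
    have hcont : Continuous fun w : EuclideanSpace ℂ (Fin q) => ‖T w‖ :=
      T.continuous.norm
    have hmem : ((‖y‖⁻¹ : ℂ) • y) ∈ Metric.sphere (0 : EuclideanSpace ℂ (Fin q)) 1 := by
      simp only [Metric.mem_sphere, dist_zero_right]; exact hy1
    obtain ⟨z, hzK, hz⟩ := hK.exists_isMaxOn ⟨_, hmem⟩ hcont.continuousOn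
    have hz1 : ‖z‖ = 1 := by simpa using hzK
    have hclaim : ∀ w, ‖T w‖ ≤ ‖T z‖ * ‖w‖ := by
      intro w
      rcases eq_or_ne w 0 with rfl | hw
      · simp
      · have hw1 : ‖(‖w‖⁻¹ : ℂ) • w‖ = 1 := norm_smul_inv_norm hw
        have hwmem : ((‖w‖⁻¹ : ℂ) • w) ∈ Metric.sphere (0 : EuclideanSpace ℂ (Fin q)) 1 := by
          simp only [Metric.mem_sphere, dist_zero_right]; exact hw1
        have hle := hz hwmem
        simp only [Set.mem_setOf_eq, _root_.map_smul, norm_smul] at hle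
        have hwpos : (0:ℝ) < ‖w‖ := norm_pos_iff.mpr hw
        have : ‖(‖w‖⁻¹ : ℂ)‖ * ‖T w‖ ≤ ‖T z‖ := hle
        rw [show ‖(‖w‖⁻¹ : ℂ)‖ = ‖w‖⁻¹ by
          simp [abs_of_nonneg (le_of_lt (inv_pos.mpr hwpos))]] at this
        calc ‖T w‖ = ‖w‖ * (‖w‖⁻¹ * ‖T w‖) := by field_simp
        _ ≤ ‖w‖ * ‖T z‖ := by nlinarith [norm_nonneg (T w)]
        _ = ‖T z‖ * ‖w‖ := mul_comm _ _
    have hnle : ‖T‖ ≤ ‖T z‖ := ContinuousLinearMap.opNorm_le_bound _ (norm_nonneg _) hclaim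
    have hTz1 : ‖T z‖ = 1 := by
      have h2 : ‖T z‖ ≤ ‖X‖ * ‖z‖ := by rw [hTapp]; exact norm_mulVec_le X z
      rw [h1, hz1, one_mul] at h2
      have : (1:ℝ) ≤ ‖T z‖ := by rw [hTX] at h1; linarith [hnle, h1.ge, h1.le]
      linarith
    have hker : (1 - Xᴴ * X) *ᵥ (WithLp.equiv 2 ((Fin q) → ℂ) z) = 0 := by
      rw [mem_ker_iff X h z, ← hTapp, hTz1, hz1]
    intro hbot
    have hz0 : (WithLp.equiv 2 ((Fin q) → ℂ) z) ≠ 0 := by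
      intro h0
      have : z = 0 := by
        apply (WithLp.equiv 2 ((Fin q) → ℂ)).injective
        simpa using h0
      rw [this] at hz1; simp at hz1
    have : (WithLp.equiv 2 ((Fin q) → ℂ) z) ∈ LinearMap.ker (1 - Xᴴ * X).mulVecLin := by
      rw [LinearMap.mem_ker, Matrix.mulVecLin_apply, hker]
    rw [hbot] at this
    exact hz0 (by simpa using this)
  · intro hne
    obtain ⟨v, hv, hv0⟩ := Submodule.ne_bot_iff _ |>.mp hne
    rw [LinearMap.mem_ker, Matrix.mulVecLin_apply] at hv
    set y := (WithLp.equiv 2 ((Fin q) → ℂ)).symm v with hy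
    have hvy : v = WithLp.equiv 2 ((Fin q) → ℂ) y := by simp [hy]
    rw [hvy] at hv
    have hnorm : ‖Matrix.toEuclideanLin X y‖ = ‖y‖ := (mem_ker_iff X h y).mp hv
    have hy0 : y ≠ 0 := by
      intro h0; apply hv0; rw [hvy, h0]; simp
    have hypos : (0:ℝ) < ‖y‖ := norm_pos_iff.mpr hy0
    have hle := norm_mulVec_le X y
    rw [hnorm] at hle
    have : (1:ℝ) ≤ ‖X‖ := by nlinarith
    linarith


end AnalHelpers

/-- The positive semidefinite square root of a positive semidefinite matrix,
extended by `0` to all matrices. -/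
noncomputable def matSqrt {n : Type*} [Fintype n] [DecidableEq n] (M : Matrix n n ℂ) :
    Matrix n n ℂ :=
  letI := Classical.dec M.PosSemidef
  if h : M.PosSemidef then
    (h.1.eigenvectorUnitary : Matrix n n ℂ) * diagonal ((↑) ∘ (√·) ∘ h.1.eigenvalues) *
      (star (h.1.eigenvectorUnitary : Matrix n n ℂ))
  else 0

section PolyHelpers


variable {n m : Type*} [Fintype n] [DecidableEq n] [Fintype m] [DecidableEq m]

/-- Conjugation by a unitary matrix as an algebra homomorphism. -/
noncomputable def conjAlgHom (u : Matrix n n ℂ) (h1 : u * uᴴ = 1) (h2 : uᴴ * u = 1) :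
    Matrix n n ℂ →ₐ[ℂ] Matrix n n ℂ where
  toFun S := u * S * uᴴ
  map_one' := by show u * 1 * uᴴ = 1; rw [mul_one, h1]
  map_mul' S T := by
    show u * (S * T) * uᴴ = (u * S * uᴴ) * (u * T * uᴴ)
    have : (u * S * uᴴ) * (u * T * uᴴ) = (u * S) * (uᴴ * u) * (T * uᴴ) := by noncomm_ring
    rw [this, h2]; noncomm_ring
  map_zero' := by show u * 0 * uᴴ = 0; simp
  map_add' S T := by show u * (S + T) * uᴴ = u * S * uᴴ + u * T * uᴴ; noncomm_ring
  commutes' r := by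
    show u * (algebraMap ℂ (Matrix n n ℂ) r) * uᴴ = algebraMap ℂ (Matrix n n ℂ) r
    rw [Algebra.algebraMap_eq_smul_one]
    rw [mul_smul_comm, mul_one, smul_mul_assoc, h1]

lemma aeval_conj (u : Matrix n n ℂ) (h1 : u * uᴴ = 1) (h2 : uᴴ * u = 1)
    (S : Matrix n n ℂ) (g : ℂ[X]) :
    aeval (u * S * uᴴ) g = u * aeval S g * uᴴ :=
  aeval_algHom_apply (conjAlgHom u h1 h2) S g

lemma aeval_diagonal (d : n → ℂ) (g : ℂ[X]) :
    aeval (diagonal d) g = diagonal (fun i => eval (d i) g) := by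
  have h := aeval_algHom_apply (Matrix.diagonalAlgHom (n := n) (α := ℂ) ℂ) d g
  rw [Matrix.diagonalAlgHom_apply] at h
  rw [h, Matrix.diagonalAlgHom_apply]
  have h3 : ((aeval d) g : n → ℂ) = fun i => eval (d i) g := by
    funext i
    have h2 := aeval_algHom_apply (Pi.evalAlgHom ℂ (fun _ => ℂ) i) d g
    simp only [Pi.evalAlgHom_apply] at h2
    rw [← h2, Polynomial.coe_aeval_eq_eval]
  rw [h3]

lemma pow_commute (A : Matrix m n ℂ) (M : Matrix n n ℂ) (N : Matrix m m ℂ)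
    (h : A * M = N * A) : ∀ k : ℕ, A * M ^ k = N ^ k * A := by
  intro k
  induction k with
  | zero => simp
  | succ k ih =>
    rw [pow_succ, pow_succ, ← Matrix.mul_assoc, ih, Matrix.mul_assoc, h, ← Matrix.mul_assoc]

lemma aeval_commute (A : Matrix m n ℂ) (M : Matrix n n ℂ) (N : Matrix m m ℂ)
    (h : A * M = N * A) (g : ℂ[X]) : A * aeval M g = aeval N g * A := by
  induction g using Polynomial.induction_on' with
  | add f g hf hg => rw [map_add, map_add, Matrix.mul_add, Matrix.add_mul, hf, hg]
  | monomial k a =>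
    rw [aeval_monomial, aeval_monomial, Algebra.algebraMap_eq_smul_one,
      Algebra.algebraMap_eq_smul_one, smul_mul_assoc, smul_mul_assoc, one_mul, one_mul,
      Matrix.mul_smul, Matrix.smul_mul, pow_commute A M N h k]

/-- The positive semidefinite square root (no longer in Mathlib). -/
noncomputable def Matrix.PosSemidef.sqrt {M : Matrix n n ℂ} (h : M.PosSemidef) : Matrix n n ℂ :=
  (h.1.eigenvectorUnitary : Matrix n n ℂ) * diagonal ((↑) ∘ (√·) ∘ h.1.eigenvalues) *
    (star (h.1.eigenvectorUnitary : Matrix n n ℂ))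

lemma Matrix.PosSemidef.posSemidef_sqrt {M : Matrix n n ℂ} (h : M.PosSemidef) :
    h.sqrt.PosSemidef := by
  have hD : (diagonal ((↑) ∘ (√·) ∘ h.1.eigenvalues) : Matrix n n ℂ).PosSemidef :=
    PosSemidef.diagonal (fun i => by simp [Real.sqrt_nonneg])
  have := hD.conjTranspose_mul_mul_same (star (h.1.eigenvectorUnitary : Matrix n n ℂ))
  simpa [Matrix.PosSemidef.sqrt, Matrix.star_eq_conjTranspose] using this

lemma Matrix.PosSemidef.sqrt_mul_self {M : Matrix n n ℂ} (h : M.PosSemidef) :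
    h.sqrt * h.sqrt = M := by
  set u : Matrix n n ℂ := (h.1.eigenvectorUnitary : Matrix n n ℂ) with hu
  have h2 : star u * u = 1 := Matrix.mem_unitaryGroup_iff'.mp h.1.eigenvectorUnitary.2
  have hD : (diagonal ((↑) ∘ (√·) ∘ h.1.eigenvalues) : Matrix n n ℂ) *
      diagonal ((↑) ∘ (√·) ∘ h.1.eigenvalues) = diagonal (RCLike.ofReal ∘ h.1.eigenvalues) := by
    rw [diagonal_mul_diagonal]
    congr 1
    funext i
    simp only [Function.comp_apply]
    rw [← Complex.ofReal_mul, Real.mul_self_sqrt (h.eigenvalues_nonneg i)]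
    rfl
  have hspec : M = u * diagonal (RCLike.ofReal ∘ h.1.eigenvalues) * star u :=
    h.1.spectral_theorem
  rw [Matrix.PosSemidef.sqrt, ← hu]
  calc u * diagonal ((↑) ∘ (√·) ∘ h.1.eigenvalues) * star u *
        (u * diagonal ((↑) ∘ (√·) ∘ h.1.eigenvalues) * star u)
      = u * diagonal ((↑) ∘ (√·) ∘ h.1.eigenvalues) * (star u * u) *
        diagonal ((↑) ∘ (√·) ∘ h.1.eigenvalues) * star u := by
        simp only [Matrix.mul_assoc]
    _ = M := by rw [h2, Matrix.mul_one, Matrix.mul_assoc u, hD, ← hspec]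

lemma sqrt_eq_aeval {M : Matrix n n ℂ} (hM : M.PosSemidef) (g : ℝ[X])
    (hg : ∀ i, eval (hM.1.eigenvalues i) g = Real.sqrt (hM.1.eigenvalues i)) :
    hM.sqrt = aeval M (g.map (algebraMap ℝ ℂ)) := by
  set u : Matrix n n ℂ := (Matrix.IsHermitian.eigenvectorUnitary hM.1 : Matrix n n ℂ) with hu
  have h1 : u * uᴴ = 1 := by
    rw [← Matrix.star_eq_conjTranspose]
    exact Matrix.mem_unitaryGroup_iff.mp (Matrix.IsHermitian.eigenvectorUnitary hM.1).2
  have h2 : uᴴ * u = 1 := by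
    rw [← Matrix.star_eq_conjTranspose]
    exact Matrix.mem_unitaryGroup_iff'.mp (Matrix.IsHermitian.eigenvectorUnitary hM.1).2
  have hspec : M = u * diagonal (RCLike.ofReal ∘ hM.1.eigenvalues) * uᴴ := by
    rw [← Matrix.star_eq_conjTranspose]
    exact hM.1.spectral_theorem
  conv_rhs => rw [hspec]
  rw [aeval_conj _ h1 h2, aeval_diagonal]
  have hdiag : (fun i => eval ((RCLike.ofReal ∘ hM.1.eigenvalues) i) (g.map (algebraMap ℝ ℂ)))
      = ((↑) ∘ Real.sqrt ∘ hM.1.eigenvalues : n → ℂ) := by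
    funext i
    simp only [Function.comp_apply, Polynomial.eval_map]
    have := Polynomial.eval₂_at_apply (algebraMap ℝ ℂ) (hM.1.eigenvalues i) (p := g)
    rw [show (RCLike.ofReal (hM.1.eigenvalues i) : ℂ) = algebraMap ℝ ℂ (hM.1.eigenvalues i) from rfl,
      Polynomial.eval₂_at_apply, hg i]
    rfl
  rw [hdiag]
  rw [Matrix.PosSemidef.sqrt, ← Matrix.star_eq_conjTranspose]

lemma sqrt_intertwine {p q : ℕ} (V : Matrix (Fin p) (Fin q) ℂ)
    (hM : (1 - Vᴴ * V).PosSemidef) (hN : (1 - V * Vᴴ).PosSemidef) :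
    V * hM.sqrt = hN.sqrt * V := by
  classical
  set s : Finset ℝ := (Finset.univ.image hM.1.eigenvalues) ∪ (Finset.univ.image hN.1.eigenvalues)
    with hs
  set g : ℝ[X] := Lagrange.interpolate s id Real.sqrt with hgdef
  have hnode : ∀ x ∈ s, eval x g = Real.sqrt x := by
    intro x hx
    have := Lagrange.eval_interpolate_at_node (v := id) (r := Real.sqrt)
      (Set.injOn_id _) hx
    simpa [hgdef] using this
  have e1 : hM.sqrt = aeval (1 - Vᴴ * V) (g.map (algebraMap ℝ ℂ)) :=
    sqrt_eq_aeval hM g (fun i => hnode _ (Finset.mem_union_left _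
      (Finset.mem_image.mpr ⟨i, Finset.mem_univ i, rfl⟩)))
  have e2 : hN.sqrt = aeval (1 - V * Vᴴ) (g.map (algebraMap ℝ ℂ)) :=
    sqrt_eq_aeval hN g (fun i => hnode _ (Finset.mem_union_right _
      (Finset.mem_image.mpr ⟨i, Finset.mem_univ i, rfl⟩)))
  have hVM : V * (1 - Vᴴ * V) = (1 - V * Vᴴ) * V := by
    rw [Matrix.mul_sub, Matrix.sub_mul, Matrix.mul_one, Matrix.one_mul, Matrix.mul_assoc]
  rw [e1, e2]
  exact aeval_commute V _ _ hVM _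

end PolyHelpers

/-- The linear fractional transformation
`𝓕_V(U) = V − (I − V V*)^{1/2} U (I − V* U)⁻¹ (I − V* V)^{1/2}`. -/
noncomputable def lft {p q : ℕ} (V U : Matrix (Fin p) (Fin q) ℂ) : Matrix (Fin p) (Fin q) ℂ :=
  V - matSqrt (1 - V * Vᴴ) * U * (1 - Vᴴ * U)⁻¹ * matSqrt (1 - Vᴴ * V)

/-- A matrix `U` is isometric on a subspace of dimension at least `k`. -/
def IsometricOnDimGE {p q : ℕ} (U : Matrix (Fin p) (Fin q) ℂ) (k : ℕ) : Prop :=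
  ∃ S : Submodule ℂ (EuclideanSpace ℂ (Fin q)), k ≤ Module.finrank ℂ S ∧
    ∀ y ∈ S, ‖Matrix.toEuclideanLin U y‖ = ‖y‖

section Iso
variable {p q : ℕ}
lemma isoDim_iff (X : Matrix (Fin p) (Fin q) ℂ) (h : (1 - Xᴴ * X).PosSemidef) (k : ℕ) :
    IsometricOnDimGE X k ↔
      k ≤ Module.finrank ℂ (LinearMap.ker (1 - Xᴴ * X).mulVecLin) := by
  constructor
  · rintro ⟨S, hkS, hS⟩
    have hle : Submodule.map (WithLp.linearEquiv 2 ℂ ((Fin q) → ℂ)).toLinearMap S ≤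
        LinearMap.ker (1 - Xᴴ * X).mulVecLin := by
      rintro v ⟨y, hyS, rfl⟩
      rw [LinearMap.mem_ker, Matrix.mulVecLin_apply]
      exact (mem_ker_iff X h y).mpr (hS y hyS)
    calc k ≤ Module.finrank ℂ S := hkS
    _ = Module.finrank ℂ (Submodule.map (WithLp.linearEquiv 2 ℂ ((Fin q) → ℂ)).toLinearMap S) :=
        (LinearEquiv.finrank_map_eq _ _).symm
    _ ≤ _ := Submodule.finrank_mono hle
  · intro hk
    refine ⟨Submodule.comap (WithLp.linearEquiv 2 ℂ ((Fin q) → ℂ)).toLinearMap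
      (LinearMap.ker (1 - Xᴴ * X).mulVecLin), ?_, ?_⟩
    · rw [Submodule.comap_equiv_eq_map_symm, LinearEquiv.finrank_map_eq]; exact hk
    · intro y hy
      rw [Submodule.mem_comap, LinearMap.mem_ker, Matrix.mulVecLin_apply] at hy
      exact (mem_ker_iff X h y).mp hy

lemma posdef_of_norm_lt (X : Matrix (Fin p) (Fin q) ℂ) (hX : ‖X‖ < 1) :
    (1 - Xᴴ * X).PosDef := by
  refine PosDef.of_dotProduct_mulVec_pos (hermit X) (fun v hv => ?_)
  set y := (WithLp.equiv 2 ((Fin q) → ℂ)).symm v with hy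
  have hvy : v = WithLp.equiv 2 ((Fin q) → ℂ) y := by simp [hy]
  rw [hvy, quad_eq']
  have hy0 : y ≠ 0 := by
    intro h0; apply hv; rw [hvy, h0]; simp
  have hypos : (0:ℝ) < ‖y‖ := norm_pos_iff.mpr hy0
  have hle : ‖Matrix.toEuclideanLin X y‖ ≤ ‖X‖ * ‖y‖ := norm_mulVec_le X y
  have hlt : ‖Matrix.toEuclideanLin X y‖ < ‖y‖ := by nlinarith [norm_nonneg (Matrix.toEuclideanLin X y)]
  have : ((‖y‖:ℂ)^2 - (‖Matrix.toEuclideanLin X y‖:ℂ)^2)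
      = (((‖y‖^2 - ‖Matrix.toEuclideanLin X y‖^2 : ℝ)) : ℂ) := by push_cast; ring
  rw [this]
  rw [Complex.zero_lt_real]
  nlinarith [norm_nonneg (Matrix.toEuclideanLin X y)]

end Iso

/-- `𝓕_V` preserves the dimension of the space on which a contraction is isometric:
`ker (I − U*U)` and `ker (I − 𝓕_V(U)*𝓕_V(U))` have the same dimension; in particular
boundary goes to boundary, and isometric subspaces of dimension `≥ k` correspond. -/
theorem lft_ker_dim_eq {p q : ℕ} (V U : Matrix (Fin p) (Fin q) ℂ)
    (hV : ‖V‖ < 1) (hU : ‖U‖ ≤ 1) :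
    Module.finrank ℂ (LinearMap.ker (1 - Uᴴ * U).mulVecLin) =
        Module.finrank ℂ (LinearMap.ker (1 - (lft V U)ᴴ * lft V U).mulVecLin) ∧
      (‖U‖ = 1 ↔ ‖lft V U‖ = 1) ∧
      ∀ k : ℕ, (IsometricOnDimGE U k ↔ IsometricOnDimGE (lft V U) k) := by
  classical
  have hMpd : (1 - Vᴴ * V).PosDef := posdef_of_norm_lt V hV
  have hVHn : ‖Vᴴ‖ < 1 := by rw [Matrix.l2_opNorm_conjTranspose]; exact hV
  have hNpd : (1 - V * Vᴴ).PosDef := by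
    have h := posdef_of_norm_lt Vᴴ hVHn
    simpa using h
  have hM : (1 - Vᴴ * V).PosSemidef := hMpd.posSemidef
  have hN : (1 - V * Vᴴ).PosSemidef := hNpd.posSemidef
  have hAdef : matSqrt (1 - V * Vᴴ) = hN.sqrt := by
    unfold matSqrt
    rw [dif_pos hN]
    rfl
  have hBdef : matSqrt (1 - Vᴴ * V) = hM.sqrt := by
    unfold matSqrt
    rw [dif_pos hM]
    rfl
  have hFdef : lft V U = V - hN.sqrt * U * (1 - Vᴴ * U)⁻¹ * hM.sqrt := by
    unfold lft
    rw [hAdef, hBdef]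
  have hA2 : hN.sqrt * hN.sqrt = 1 - V * Vᴴ := hN.sqrt_mul_self
  have hB2 : hM.sqrt * hM.sqrt = 1 - Vᴴ * V := hM.sqrt_mul_self
  have hAH : (hN.sqrt)ᴴ = hN.sqrt := hN.posSemidef_sqrt.1
  have hBH : (hM.sqrt)ᴴ = hM.sqrt := hM.posSemidef_sqrt.1
  have hint : V * hM.sqrt = hN.sqrt * V := sqrt_intertwine V hM hN
  have hIherm : Vᴴ * hN.sqrt = hM.sqrt * Vᴴ := by
    have h := congrArg Matrix.conjTranspose hint
    simp only [Matrix.conjTranspose_mul, hAH, hBH] at h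
    exact h.symm
  -- invertibility of 1 - Vᴴ * U
  have h1n : ‖Vᴴ * U‖ ≤ ‖V‖ * ‖U‖ := by
    have h := Matrix.l2_opNorm_mul Vᴴ U
    rwa [Matrix.l2_opNorm_conjTranspose] at h
  have hnormE : ‖Vᴴ * U‖ < 1 :=
    lt_of_le_of_lt h1n (by nlinarith [norm_nonneg V, norm_nonneg U])
  haveI : CompleteSpace (Matrix (Fin q) (Fin q) ℂ) := FiniteDimensional.complete ℂ _
  have hEunit : IsUnit (1 - Vᴴ * U) := ⟨Units.oneSub _ hnormE, rfl⟩
  have hEdet : IsUnit (1 - Vᴴ * U).det := (Matrix.isUnit_iff_isUnit_det _).mp hEunit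
  have hEW : (1 - Vᴴ * U) * (1 - Vᴴ * U)⁻¹ = 1 := Matrix.mul_nonsing_inv _ hEdet
  have hconjE : (1 - Vᴴ * U)ᴴ = 1 - Uᴴ * V := by
    simp [Matrix.conjTranspose_sub, Matrix.conjTranspose_mul]
  have hWH : ((1 - Vᴴ * U)⁻¹)ᴴ = (1 - Uᴴ * V)⁻¹ := by
    rw [Matrix.conjTranspose_nonsing_inv, hconjE]
  have hW'E' : (1 - Uᴴ * V)⁻¹ * (1 - Uᴴ * V) = 1 := by
    have h := congrArg Matrix.conjTranspose hEW
    simp only [Matrix.conjTranspose_mul, Matrix.conjTranspose_one] at h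
    rwa [hWH, hconjE] at h
  have h1ring : (Vᴴ * U) * (1 - Vᴴ * U)⁻¹ = (1 - Vᴴ * U)⁻¹ - 1 := by
    have h4 : (1 - Vᴴ * U) * (1 - Vᴴ * U)⁻¹ =
        (1 - Vᴴ * U)⁻¹ - (Vᴴ * U) * (1 - Vᴴ * U)⁻¹ := by
      rw [Matrix.sub_mul, Matrix.one_mul]
    have h5 : (1 - Vᴴ * U)⁻¹ - (Vᴴ * U) * (1 - Vᴴ * U)⁻¹ = 1 := h4.symm.trans hEW
    have h6 : (1 - Vᴴ * U)⁻¹ = 1 + (Vᴴ * U) * (1 - Vᴴ * U)⁻¹ := sub_eq_iff_eq_add.mp h5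
    refine eq_sub_iff_add_eq.mpr ?_
    rw [add_comm]
    exact h6.symm
  have h2ring : (1 - Uᴴ * V)⁻¹ * (Uᴴ * V) = (1 - Uᴴ * V)⁻¹ - 1 := by
    have h4 : (1 - Uᴴ * V)⁻¹ * (1 - Uᴴ * V) =
        (1 - Uᴴ * V)⁻¹ - (1 - Uᴴ * V)⁻¹ * (Uᴴ * V) := by
      rw [Matrix.mul_sub, Matrix.mul_one]
    have h5 : (1 - Uᴴ * V)⁻¹ - (1 - Uᴴ * V)⁻¹ * (Uᴴ * V) = 1 := h4.symm.trans hW'E'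
    have h6 : (1 - Uᴴ * V)⁻¹ = 1 + (1 - Uᴴ * V)⁻¹ * (Uᴴ * V) := sub_eq_iff_eq_add.mp h5
    refine eq_sub_iff_add_eq.mpr ?_
    rw [add_comm]
    exact h6.symm
  have hFH : (lft V U)ᴴ = Vᴴ - hM.sqrt * (1 - Uᴴ * V)⁻¹ * Uᴴ * hN.sqrt := by
    rw [hFdef]
    simp only [Matrix.conjTranspose_sub, Matrix.conjTranspose_mul, hAH, hBH, hWH,
      Matrix.mul_assoc]
  have key : 1 - (lft V U)ᴴ * lft V U =
      hM.sqrt * ((1 - Uᴴ * V)⁻¹ * (1 - Uᴴ * U) * (1 - Vᴴ * U)⁻¹) * hM.sqrt := by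
    rw [hFH, hFdef]
    exact main_id V U hN.sqrt hM.sqrt _ _ hA2 hB2 hIherm hint.symm h1ring h2ring
  have hZpsd : (1 - Uᴴ * U).PosSemidef := psd_of_norm_le U hU
  have hCH : ((1 - Vᴴ * U)⁻¹ * hM.sqrt)ᴴ = hM.sqrt * (1 - Uᴴ * V)⁻¹ := by
    rw [Matrix.conjTranspose_mul, hBH, hWH]
  have key2 : 1 - (lft V U)ᴴ * lft V U =
      ((1 - Vᴴ * U)⁻¹ * hM.sqrt)ᴴ * (1 - Uᴴ * U) * ((1 - Vᴴ * U)⁻¹ * hM.sqrt) := by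
    rw [key, hCH]
    simp only [Matrix.mul_assoc]
  have hFpsd : (1 - (lft V U)ᴴ * lft V U).PosSemidef := by
    rw [key2]
    exact hZpsd.conjTranspose_mul_mul_same _
  -- invertibility of C := (1 - Vᴴ U)⁻¹ * sqrt(1 - VᴴV)
  have hMdet : IsUnit (1 - Vᴴ * V).det := isUnit_iff_ne_zero.mpr (ne_of_gt hMpd.det_pos)
  have hBdet : IsUnit (hM.sqrt).det := by
    have h7 : (hM.sqrt).det * (hM.sqrt).det = (1 - Vᴴ * V).det := by
      rw [← Matrix.det_mul, hB2]
    rw [← h7] at hMdet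
    exact isUnit_of_mul_isUnit_left hMdet
  have hCdet : IsUnit ((1 - Vᴴ * U)⁻¹ * hM.sqrt).det := by
    rw [Matrix.det_mul]
    exact (Matrix.isUnit_nonsing_inv_det _ hEdet).mul hBdet
  have hCC : ((1 - Vᴴ * U)⁻¹ * hM.sqrt) * ((1 - Vᴴ * U)⁻¹ * hM.sqrt)⁻¹ = 1 :=
    Matrix.mul_nonsing_inv _ hCdet
  have hC'C : ((1 - Vᴴ * U)⁻¹ * hM.sqrt)⁻¹ * ((1 - Vᴴ * U)⁻¹ * hM.sqrt) = 1 :=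
    Matrix.nonsing_inv_mul _ hCdet
  let e : ((Fin q) → ℂ) ≃ₗ[ℂ] ((Fin q) → ℂ) :=
    LinearEquiv.ofLinear ((1 - Vᴴ * U)⁻¹ * hM.sqrt).mulVecLin
      (((1 - Vᴴ * U)⁻¹ * hM.sqrt)⁻¹).mulVecLin
      (by rw [← Matrix.mulVecLin_mul, hCC, Matrix.mulVecLin_one])
      (by rw [← Matrix.mulVecLin_mul, hC'C, Matrix.mulVecLin_one])
  have hkercomap : LinearMap.ker (1 - (lft V U)ᴴ * lft V U).mulVecLin
      = Submodule.comap (e : ((Fin q) → ℂ) →ₗ[ℂ] ((Fin q) → ℂ))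
          (LinearMap.ker (1 - Uᴴ * U).mulVecLin) := by
    ext v
    simp only [LinearMap.mem_ker, Submodule.mem_comap, Matrix.mulVecLin_apply,
      LinearEquiv.coe_coe, e, LinearEquiv.ofLinear_apply]
    constructor
    · intro h0
      rw [key2] at h0
      have h8 : ((1 - Vᴴ * U)⁻¹ * hM.sqrt)ᴴ *ᵥ
          ((1 - Uᴴ * U) *ᵥ (((1 - Vᴴ * U)⁻¹ * hM.sqrt) *ᵥ v)) = 0 := by
        rw [Matrix.mulVec_mulVec, Matrix.mulVec_mulVec]
        exact h0
      have hCHdet : IsUnit (((1 - Vᴴ * U)⁻¹ * hM.sqrt)ᴴ).det := by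
        rw [Matrix.det_conjTranspose]
        exact hCdet.star
      have hinj := Matrix.mulVec_injective_iff_isUnit.mpr
        ((Matrix.isUnit_iff_isUnit_det _).mpr hCHdet)
      apply hinj
      rw [h8, Matrix.mulVec_zero]
    · intro h0
      rw [key2, ← Matrix.mulVec_mulVec, ← Matrix.mulVec_mulVec, h0, Matrix.mulVec_zero]
  have hfr : Module.finrank ℂ (LinearMap.ker (1 - Uᴴ * U).mulVecLin) =
      Module.finrank ℂ (LinearMap.ker (1 - (lft V U)ᴴ * lft V U).mulVecLin) := by
    rw [hkercomap, Submodule.comap_equiv_eq_map_symm, LinearEquiv.finrank_map_eq]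
  refine ⟨hfr, ?_, ?_⟩
  · rw [norm_eq_one_iff U hZpsd, norm_eq_one_iff (lft V U) hFpsd]
    have h10 : (LinearMap.ker (1 - Uᴴ * U).mulVecLin = ⊥) ↔
        (LinearMap.ker (1 - (lft V U)ᴴ * lft V U).mulVecLin = ⊥) := by
      rw [← Submodule.finrank_eq_zero (R := ℂ), ← Submodule.finrank_eq_zero (R := ℂ), hfr]
    exact not_congr h10
  · intro k
    rw [isoDim_iff U hZpsd k, isoDim_iff (lft V U) hFpsd k, hfr]
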